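/- arXiv:1004.1584 — 2 statements merged into one kernel-verified Lean document; each statement's English description precedes it below -/
import Mathlib

section
/- Let A and B be closed densely defined operators between Banach spaces X and Y (A : dom A ⊂ X → Y, B : dom B ⊂ Y → X) such that ρ(AB) and ρ(BA) are both nonempty. If λ ∈ ρ(AB) with λ ≠ 0, then λ ∈ ρ(BA); hence σ(AB)∖{0} = σ(BA)∖{0}. -/
/-- The composition `A ∘ B` of partially defined linear operators, with its natural
domain `dom (AB) = {x ∈ dom B : Bx ∈ dom A}`. -/
noncomputable def LinearPMap.pcomp {𝕜 E F G : Type*} [Field 𝕜]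
    [AddCommGroup E] [Module 𝕜 E] [AddCommGroup F] [Module 𝕜 F]
    [AddCommGroup G] [Module 𝕜 G] (A : F →ₗ.[𝕜] G) (B : E →ₗ.[𝕜] F) : E →ₗ.[𝕜] G where
  domain := (A.domain.comap B.toFun).map B.domain.subtype
  toFun := A.toFun ∘ₗ (B.toFun.restrict (q := A.domain) (fun _ hx => hx)) ∘ₗ
    (Submodule.equivMapOfInjective B.domain.subtype (Submodule.injective_subtype _)
      (A.domain.comap B.toFun)).symm.toLinearMap

section pcompAPI
variable {𝕜 E F G : Type*} [Field 𝕜]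
    [AddCommGroup E] [Module 𝕜 E] [AddCommGroup F] [Module 𝕜 F]
    [AddCommGroup G] [Module 𝕜 G] {A : F →ₗ.[𝕜] G} {B : E →ₗ.[𝕜] F}

theorem pcomp_mem (b : B.domain) (hb : B b ∈ A.domain) :
    (b : E) ∈ (A.pcomp B).domain :=
  ⟨b, hb, rfl⟩

theorem pcomp_mem' {x : E} (hx : x ∈ (A.pcomp B).domain) :
    ∃ (h : x ∈ B.domain), B ⟨x, h⟩ ∈ A.domain := by
  obtain ⟨b, hb, rfl⟩ := hx
  exact ⟨b.2, hb⟩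

theorem pcomp_apply (b : B.domain) (hb : B b ∈ A.domain) :
    A.pcomp B ⟨(b : E), pcomp_mem b hb⟩ = A ⟨B b, hb⟩ := by
  have h1 : (Submodule.equivMapOfInjective B.domain.subtype (Submodule.injective_subtype _)
      (A.domain.comap B.toFun)).symm ⟨(b : E), pcomp_mem b hb⟩ = ⟨b, hb⟩ := by
    apply (Submodule.equivMapOfInjective B.domain.subtype (Submodule.injective_subtype _)
      (A.domain.comap B.toFun)).injective.eq_iff.mp
    rw [LinearEquiv.apply_symm_apply]
    apply Subtype.ext
    rw [Submodule.coe_equivMapOfInjective_apply]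
    rfl
  show A.toFun _ = _
  show A.toFun (B.toFun.restrict (q := A.domain) (fun _ hx => hx)
    ((Submodule.equivMapOfInjective B.domain.subtype (Submodule.injective_subtype _)
      (A.domain.comap B.toFun)).symm ⟨(b : E), pcomp_mem b hb⟩)) = _
  rw [h1]
  show A.toFun ⟨B.toFun ⟨b, b.2⟩, hb⟩ = A.toFun ⟨B b, hb⟩
  rfl

theorem pcomp_apply' (x : (A.pcomp B).domain) (h1 : (x : E) ∈ B.domain)
    (h2 : B ⟨(x : E), h1⟩ ∈ A.domain) :
    A.pcomp B x = A ⟨B ⟨(x : E), h1⟩, h2⟩ := by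
  have hx : x = ⟨((⟨(x : E), h1⟩ : B.domain) : E), pcomp_mem _ h2⟩ := Subtype.ext rfl
  exact (congrArg _ hx).trans (pcomp_apply _ h2)

end pcompAPI

/-- The resolvent set of a partially defined operator `T` in a Banach space: those
`λ` for which `T - λ : dom T → E` is bijective with bounded inverse. -/
def pResolventSet {E : Type*} [NormedAddCommGroup E] [NormedSpace ℂ E]
    (T : E →ₗ.[ℂ] E) : Set ℂ :=
  {l | Function.Bijective (fun x : T.domain => T x - l • (x : E)) ∧
       ∃ C > (0 : ℝ), ∀ x : T.domain, ‖(x : E)‖ ≤ C * ‖T x - l • (x : E)‖}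

open Filter Topology in
theorem key {X Y : Type*} [NormedAddCommGroup X] [NormedSpace ℂ X] [CompleteSpace X]
    [NormedAddCommGroup Y] [NormedSpace ℂ Y] [CompleteSpace Y]
    (A : X →ₗ.[ℂ] Y) (B : Y →ₗ.[ℂ] X)
    (hρBA : (pResolventSet (B.pcomp A)).Nonempty)
    (l : ℂ) (hl : l ≠ 0) (hlAB : l ∈ pResolventSet (A.pcomp B)) :
    l ∈ pResolventSet (B.pcomp A) := by
  obtain ⟨hSbij, CS, hCS0, hCSb⟩ := hlAB
  obtain ⟨μ, hTbij, Cμ, hCμ0, hCμb⟩ := hρBA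
  set S := A.pcomp B with hS
  set T := B.pcomp A with hT
  -- zero implies zero
  have hinj0 : ∀ x : T.domain, T x - l • (x : X) = 0 → (x : X) = 0 := by
    intro x hx
    obtain ⟨h1, h2⟩ := pcomp_mem' x.2
    have hTx : T x = B ⟨A ⟨(x : X), h1⟩, h2⟩ := pcomp_apply' x h1 h2
    have hBx : B ⟨A ⟨(x : X), h1⟩, h2⟩ = l • (x : X) := by
      rw [← hTx]; exact sub_eq_zero.mp hx
    have hb : B ⟨A ⟨(x : X), h1⟩, h2⟩ ∈ A.domain := by
      rw [hBx]; exact A.domain.smul_mem l h1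
    set v : S.domain := ⟨(A ⟨(x : X), h1⟩ : Y), pcomp_mem ⟨A ⟨(x : X), h1⟩, h2⟩ hb⟩ with hv
    have hSv : S v = A ⟨B ⟨A ⟨(x : X), h1⟩, h2⟩, hb⟩ := pcomp_apply _ hb
    have hSv2 : S v = l • A ⟨(x : X), h1⟩ := by
      rw [hSv, show (⟨B ⟨A ⟨(x : X), h1⟩, h2⟩, hb⟩ : A.domain)
        = l • ⟨(x : X), h1⟩ from Subtype.ext hBx, A.map_smul]
    have hv0 : v = 0 := by
      apply hSbij.injective
      show S v - l • (v : Y) = S 0 - l • ((0 : S.domain) : Y)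
      rw [hSv2, S.map_zero]
      simp [hv]
    have hAx : A ⟨(x : X), h1⟩ = 0 := by
      have := congrArg (Subtype.val) hv0
      simpa [hv] using this
    have hlx : l • (x : X) = 0 := by
      rw [← hBx, show (⟨A ⟨(x : X), h1⟩, h2⟩ : B.domain) = 0 from Subtype.ext hAx,
        B.map_zero]
    simpa [hl] using hlx
  have hinj : Function.Injective (fun x : T.domain => T x - l • (x : X)) := by
    intro a b hab
    simp only at hab
    have h0 : T (a - b) - l • ((a - b : T.domain) : X) = 0 := by
      rw [T.map_sub, Submodule.coe_sub, smul_sub,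
        show T a - T b - (l • (a : X) - l • (b : X))
          = (T a - l • (a : X)) - (T b - l • (b : X)) by abel, hab, sub_self]
    have := hinj0 _ h0
    rw [Submodule.coe_sub, sub_eq_zero] at this
    exact Subtype.ext this
  -- surjectivity onto dom A
  have hsurjA : ∀ y : A.domain, ∃ x : T.domain, T x - l • (x : X) = (y : X) := by
    intro y
    obtain ⟨u, hu⟩ := hSbij.surjective (A y)
    simp only at hu
    obtain ⟨h1, h2⟩ := pcomp_mem' u.2
    have hSu : S u = A ⟨B ⟨(u : Y), h1⟩, h2⟩ := pcomp_apply' u h1 h2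
    set xv : X := l⁻¹ • ((B ⟨(u : Y), h1⟩ : X) - (y : X)) with hxv
    have hx1 : xv ∈ A.domain := A.domain.smul_mem _ (A.domain.sub_mem h2 y.2)
    have hAx : A ⟨xv, hx1⟩ = (u : Y) := by
      have e1 : (⟨xv, hx1⟩ : A.domain) = l⁻¹ • (⟨(B ⟨(u : Y), h1⟩ : X), h2⟩ - y) :=
        Subtype.ext rfl
      rw [e1, A.map_smul, A.map_sub, ← hSu,
        show S u = A y + l • (u : Y) by rw [← hu]; abel,
        show A y + l • (u : Y) - A y = l • (u : Y) by abel, smul_smul,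
        inv_mul_cancel₀ hl, one_smul]
    have hx2 : A ⟨xv, hx1⟩ ∈ B.domain := by rw [hAx]; exact h1
    refine ⟨⟨xv, pcomp_mem (B := A) ⟨xv, hx1⟩ hx2⟩, ?_⟩
    have hTx : T ⟨xv, pcomp_mem (B := A) ⟨xv, hx1⟩ hx2⟩ = B ⟨A ⟨xv, hx1⟩, hx2⟩ :=
      pcomp_apply _ hx2
    rw [hTx, show (⟨A ⟨xv, hx1⟩, hx2⟩ : B.domain) = ⟨(u : Y), h1⟩ from Subtype.ext hAx]
    show (B ⟨(u : Y), h1⟩ : X) - l • xv = (y : X)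
    rw [hxv, smul_smul, mul_inv_cancel₀ hl, one_smul]
    abel
  -- full surjectivity
  have hsurj : Function.Surjective (fun x : T.domain => T x - l • (x : X)) := by
    intro y
    obtain ⟨z, hz⟩ := hTbij.surjective y
    simp only at hz
    obtain ⟨hz1, hz2⟩ := pcomp_mem' z.2
    obtain ⟨w, hw⟩ := hsurjA ((l - μ) • ⟨(z : X), hz1⟩)
    refine ⟨z + w, ?_⟩
    have hTz : T z = y + μ • (z : X) := by rw [← hz]; abel
    have hw' : T w = (l - μ) • (z : X) + l • (w : X) := by
      have e2 : ((((l - μ) • ⟨(z : X), hz1⟩ : A.domain)) : X) = (l - μ) • (z : X) := rfl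
      rw [← sub_eq_zero,
        show T w - ((l - μ) • (z : X) + l • (w : X))
          = (T w - l • (w : X)) - (l - μ) • (z : X) by abel, hw, e2, sub_self]
    show T (z + w) - l • ((z + w : T.domain) : X) = y
    rw [T.map_add, Submodule.coe_add, hTz, hw', smul_add, sub_smul]
    abel
  -- μ-inverse and closedness of the graph of T
  set Fμ : T.domain →ₗ[ℂ] X := T.toFun - μ • T.domain.subtype with hFμ
  have hFμa : ∀ x : T.domain, Fμ x = T x - μ • (x : X) := fun x => rfl
  have hFμfun : (fun x : T.domain => T x - μ • (x : X)) = ⇑Fμ := funext fun x => rfl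
  have hFμbij : Function.Bijective Fμ := hFμfun ▸ hTbij
  set eμ := LinearEquiv.ofBijective Fμ hFμbij with heμ
  have heμa : ∀ x : T.domain, eμ x = Fμ x := fun x => rfl
  have hlip : LipschitzWith (Real.toNNReal Cμ)
      (fun y : X => ((eμ.symm y : T.domain) : X)) := by
    apply LipschitzWith.of_dist_le_mul
    intro a b
    simp only [dist_eq_norm, ← Submodule.coe_sub, ← map_sub]
    calc ‖((eμ.symm (a - b) : T.domain) : X)‖
        ≤ Cμ * ‖T (eμ.symm (a - b)) - μ • ((eμ.symm (a - b) : T.domain) : X)‖ :=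
          hCμb _
      _ = Cμ * ‖a - b‖ := by rw [← hFμa, ← heμa, eμ.apply_symm_apply]
      _ ≤ Real.toNNReal Cμ * ‖a - b‖ := by
          gcongr
          exact (Real.coe_toNNReal _ hCμ0.le).ge
  have hgraph : IsClosed {p : X × X | ∃ hx : p.1 ∈ T.domain, T ⟨p.1, hx⟩ = p.2} := by
    apply IsSeqClosed.isClosed
    intro pn p hpn hlim
    have hyn : Tendsto (fun n => (pn n).2 - μ • (pn n).1) atTop (𝓝 (p.2 - μ • p.1)) := by
      exact ((continuous_snd.tendsto p).comp hlim).sub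
        (((continuous_fst.tendsto p).comp hlim).const_smul μ)
    have hxn : ∀ n, (pn n).1 = ((eμ.symm ((pn n).2 - μ • (pn n).1) : T.domain) : X) := by
      intro n
      obtain ⟨hx, hTx⟩ := hpn n
      have hF : eμ ⟨(pn n).1, hx⟩ = (pn n).2 - μ • (pn n).1 := by
        rw [heμa, hFμa, hTx]
      rw [← hF, eμ.symm_apply_apply]
    have hx : p.1 = ((eμ.symm (p.2 - μ • p.1) : T.domain) : X) := by
      have h1 : Tendsto (fun n => (pn n).1) atTop (𝓝 p.1) :=
        (continuous_fst.tendsto p).comp hlim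
      have h2 : Tendsto (fun n => ((eμ.symm ((pn n).2 - μ • (pn n).1) : T.domain) : X))
          atTop (𝓝 ((eμ.symm (p.2 - μ • p.1) : T.domain) : X)) :=
        (hlip.continuous.tendsto _).comp hyn
      refine tendsto_nhds_unique ?_ h2
      rw [show (fun n => ((eμ.symm ((pn n).2 - μ • (pn n).1) : T.domain) : X))
        = fun n => (pn n).1 from funext fun n => (hxn n).symm]
      exact h1
    refine ⟨hx ▸ (eμ.symm (p.2 - μ • p.1)).2, ?_⟩
    have he : (⟨p.1, hx ▸ (eμ.symm (p.2 - μ • p.1)).2⟩ : T.domain)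
        = eμ.symm (p.2 - μ • p.1) := Subtype.ext hx
    have hval : T (eμ.symm (p.2 - μ • p.1)) - μ • ((eμ.symm (p.2 - μ • p.1) : T.domain) : X)
        = p.2 - μ • p.1 := by
      rw [← hFμa, ← heμa, eμ.apply_symm_apply]
    rw [he, sub_eq_iff_eq_add.mp hval, ← hx]
    abel
  -- the l-inverse G and its boundedness via the closed graph theorem
  set F : T.domain →ₗ[ℂ] X := T.toFun - l • T.domain.subtype with hF
  have hFa : ∀ x : T.domain, F x = T x - l • (x : X) := fun x => rfl
  have hFfun : (fun x : T.domain => T x - l • (x : X)) = ⇑F := funext fun x => rfl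
  have hFbij : Function.Bijective F := hFfun ▸ ⟨hinj, hsurj⟩
  set e := LinearEquiv.ofBijective F hFbij with he
  have hea : ∀ x : T.domain, e x = F x := fun x => rfl
  set G : X →ₗ[ℂ] X := T.domain.subtype ∘ₗ (e.symm : X →ₗ[ℂ] T.domain) with hG
  have hGa : ∀ y, G y = ((e.symm y : T.domain) : X) := fun y => rfl
  have hGgraph : IsClosed (G.graph : Set (X × X)) := by
    have hseteq : (G.graph : Set (X × X)) = (fun p : X × X => (p.2, p.1 + l • p.2)) ⁻¹'
        {p : X × X | ∃ hx : p.1 ∈ T.domain, T ⟨p.1, hx⟩ = p.2} := by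
      ext ⟨y, x⟩
      simp only [SetLike.mem_coe, LinearMap.mem_graph_iff, Set.mem_preimage,
        Set.mem_setOf_eq]
      constructor
      · intro hxy
        have hx : x ∈ T.domain := hxy ▸ (e.symm y).2
        refine ⟨hx, ?_⟩
        have he2 : (⟨x, hx⟩ : T.domain) = e.symm y := Subtype.ext (show x = _ by rw [hxy, hGa])
        have hF2 : T (e.symm y) - l • ((e.symm y : T.domain) : X) = y := by
          rw [← hFa, ← hea, e.apply_symm_apply]
        rw [he2, sub_eq_iff_eq_add.mp hF2, ← hGa, ← hxy]
      · rintro ⟨hx, hTx⟩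
        have hF2 : F ⟨x, hx⟩ = y := by
          rw [hFa, hTx]; abel
        rw [hGa, ← hF2, ← hea, e.symm_apply_apply]
    rw [hseteq]
    exact hgraph.preimage (continuous_snd.prodMk
      (continuous_fst.add (continuous_snd.const_smul l)))
  have hGcont : Continuous G := G.continuous_of_isClosed_graph hGgraph
  obtain ⟨M, hM0, hM⟩ := SemilinearMapClass.bound_of_continuous G hGcont
  refine ⟨⟨hinj, hsurj⟩, M, hM0, ?_⟩
  intro x
  have hGx : G (T x - l • (x : X)) = (x : X) := by
    rw [hGa, ← hFa, ← hea, e.symm_apply_apply]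
  calc ‖(x : X)‖ = ‖G (T x - l • (x : X))‖ := by rw [hGx]
    _ ≤ M * ‖T x - l • (x : X)‖ := hM _

/-- For closed densely defined operators `A : dom A ⊂ X → Y` and
`B : dom B ⊂ Y → X` with both `ρ(AB)` and `ρ(BA)` nonempty, any nonzero `λ ∈ ρ(AB)`
also belongs to `ρ(BA)`; hence `σ(AB) \ {0} = σ(BA) \ {0}`. -/
theorem stmt4 {X Y : Type*} [NormedAddCommGroup X] [NormedSpace ℂ X] [CompleteSpace X]
    [NormedAddCommGroup Y] [NormedSpace ℂ Y] [CompleteSpace Y]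
    (A : X →ₗ.[ℂ] Y) (B : Y →ₗ.[ℂ] X)
    (hAdense : Dense (A.domain : Set X)) (hBdense : Dense (B.domain : Set Y))
    (hA : A.IsClosed) (hB : B.IsClosed)
    (hρAB : (pResolventSet (A.pcomp B)).Nonempty)
    (hρBA : (pResolventSet (B.pcomp A)).Nonempty)
    (l : ℂ) (hl : l ≠ 0) (hlAB : l ∈ pResolventSet (A.pcomp B)) :
    l ∈ pResolventSet (B.pcomp A) ∧
    {μ : ℂ | μ ∉ pResolventSet (A.pcomp B)} \ {0} =
      {μ : ℂ | μ ∉ pResolventSet (B.pcomp A)} \ {0} := by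
  refine ⟨key A B hρBA l hl hlAB, ?_⟩
  ext μ
  simp only [Set.mem_diff, Set.mem_setOf_eq, Set.mem_singleton_iff]
  constructor
  · rintro ⟨hμ, hμ0⟩
    exact ⟨fun h => hμ (key B A hρAB μ hμ0 h), hμ0⟩
  · rintro ⟨hμ, hμ0⟩
    exact ⟨fun h => hμ (key A B hρBA μ hμ0 h), hμ0⟩
end

section
/- Let A : X → Y and B : Y → X be bounded operators between Banach spaces and let λ ≠ 0. Then λ belongs to the residual spectrum of AB if and only if λ belongs to the residual spectrum of BA, and likewise for the continuous spectrum. -/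
theorem stmt11_ker_aux {X Y : Type*} [NormedAddCommGroup X] [NormedSpace ℂ X]
    [NormedAddCommGroup Y] [NormedSpace ℂ Y]
    (A : X →L[ℂ] Y) (B : Y →L[ℂ] X) (l : ℂ) (hl : l ≠ 0)
    (h : LinearMap.ker ((B.comp A - l • (1 : X →L[ℂ] X) : X →L[ℂ] X) : X →ₗ[ℂ] X) = ⊥) :
    LinearMap.ker ((A.comp B - l • (1 : Y →L[ℂ] Y) : Y →L[ℂ] Y) : Y →ₗ[ℂ] Y) = ⊥ := by
  rw [Submodule.eq_bot_iff] at h ⊢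
  intro y hy
  rw [LinearMap.mem_ker] at hy
  simp only [ContinuousLinearMap.coe_coe, ContinuousLinearMap.sub_apply, ContinuousLinearMap.smul_apply,
    ContinuousLinearMap.one_apply, ContinuousLinearMap.comp_apply, sub_eq_zero] at hy
  have hBy : B y = 0 := by
    apply h
    rw [LinearMap.mem_ker]
    simp only [ContinuousLinearMap.coe_coe, ContinuousLinearMap.sub_apply, ContinuousLinearMap.smul_apply,
      ContinuousLinearMap.one_apply, ContinuousLinearMap.comp_apply, sub_eq_zero]
    rw [hy, map_smul]
  have : l • y = 0 := by rw [← hy, hBy, map_zero]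
  exact (smul_eq_zero_iff_right hl).mp this

theorem stmt11_dense_aux {X Y : Type*} [NormedAddCommGroup X] [NormedSpace ℂ X]
    [NormedAddCommGroup Y] [NormedSpace ℂ Y]
    (A : X →L[ℂ] Y) (B : Y →L[ℂ] X) (l : ℂ) (hl : l ≠ 0)
    (h : Dense (Set.range (B.comp A - l • (1 : X →L[ℂ] X)))) :
    Dense (Set.range (A.comp B - l • (1 : Y →L[ℂ] Y))) := by
  set T := A.comp B - l • (1 : Y →L[ℂ] Y) with hT
  set S := B.comp A - l • (1 : X →L[ℂ] X) with hS
  have key : ∀ x : X, A (S x) = T (A x) := by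
    intro x
    simp [hT, hS, map_sub, map_smul]
  rw [dense_iff_closure_eq, Set.eq_univ_iff_forall]
  intro y
  have hABy : A (B y) ∈ closure (Set.range ⇑T) := by
    refine map_mem_closure (s := Set.range ⇑S) A.continuous (h (B y)) ?_
    rintro _ ⟨x, rfl⟩
    exact ⟨A x, (key x).symm⟩
  have hTy : T y ∈ closure (Set.range ⇑T) := subset_closure ⟨y, rfl⟩
  have hcoe : (((LinearMap.range (T : Y →ₗ[ℂ] Y)).topologicalClosure : Submodule ℂ Y) : Set Y)
      = closure (Set.range ⇑T) := by
    rw [Submodule.topologicalClosure_coe, LinearMap.coe_range, ContinuousLinearMap.coe_coe]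
  have hy : y = l⁻¹ • (A (B y) - T y) := by
    have : T y = A (B y) - l • y := by simp [hT]
    rw [this]
    rw [sub_sub_cancel, smul_smul, inv_mul_cancel₀ hl, one_smul]
  rw [hy, ← hcoe] at *
  exact Submodule.smul_mem _ _ (Submodule.sub_mem _ hABy hTy)

theorem stmt11_unit_aux {X Y : Type*} [NormedAddCommGroup X] [NormedSpace ℂ X]
    [NormedAddCommGroup Y] [NormedSpace ℂ Y]
    (A : X →L[ℂ] Y) (B : Y →L[ℂ] X) (l : ℂ) (hl : l ≠ 0)
    (hu : IsUnit ((algebraMap ℂ (Y →L[ℂ] Y)) l - A.comp B)) :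
    IsUnit ((algebraMap ℂ (X →L[ℂ] X)) l - B.comp A) := by
  set C : Y →L[ℂ] Y := ↑hu.unit⁻¹ with hC
  have h1 : ((algebraMap ℂ (Y →L[ℂ] Y)) l - A.comp B) * C = 1 := by
    rw [← hu.unit_spec]; exact hu.unit.mul_inv
  have h2 : C * ((algebraMap ℂ (Y →L[ℂ] Y)) l - A.comp B) = 1 := by
    rw [← hu.unit_spec]; exact hu.unit.inv_mul
  have h1' : ∀ v : Y, l • C v - A (B (C v)) = v := by
    intro v
    have := ContinuousLinearMap.ext_iff.mp h1 v
    simpa [Algebra.algebraMap_eq_smul_one, ContinuousLinearMap.mul_apply] using this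
  have h2' : ∀ v : Y, C (l • v - A (B v)) = v := by
    intro v
    have := ContinuousLinearMap.ext_iff.mp h2 v
    simpa [Algebra.algebraMap_eq_smul_one, ContinuousLinearMap.mul_apply] using this
  set D : X →L[ℂ] X := l⁻¹ • (1 + B.comp (C.comp A)) with hD
  rw [isUnit_iff_exists]
  refine ⟨D, ?_, ?_⟩
  · ext x
    simp only [hD, Algebra.algebraMap_eq_smul_one, ContinuousLinearMap.mul_apply,
      ContinuousLinearMap.smul_apply, ContinuousLinearMap.sub_apply,
      ContinuousLinearMap.add_apply, ContinuousLinearMap.one_apply,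
      ContinuousLinearMap.comp_apply, ContinuousLinearMap.coe_smul', Pi.smul_apply]
    have hABC : A (B (C (A x))) = l • C (A x) - A x := by
      have := h1' (A x); linear_combination (norm := module) -this
    simp only [map_add, map_smul, map_sub, hABC]
    match_scalars <;> field_simp <;> ring
  · ext x
    simp only [hD, Algebra.algebraMap_eq_smul_one, ContinuousLinearMap.mul_apply,
      ContinuousLinearMap.smul_apply, ContinuousLinearMap.sub_apply,
      ContinuousLinearMap.add_apply, ContinuousLinearMap.one_apply,
      ContinuousLinearMap.comp_apply, ContinuousLinearMap.coe_smul', Pi.smul_apply]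
    have : C (A (l • x - B (A x))) = A x := by
      rw [map_sub, map_smul]
      exact h2' (A x)
    rw [this]
    match_scalars <;> field_simp <;> ring

theorem stmt11_inv_aux {X : Type*} [NormedAddCommGroup X] [NormedSpace ℂ X] [CompleteSpace X]
    (T : X →L[ℂ] X) (hk : LinearMap.ker (T : X →ₗ[ℂ] X) = ⊥) (hr : Set.range ⇑T = Set.univ) :
    IsUnit T := by
  have hr' : LinearMap.range (T : X →ₗ[ℂ] X) = ⊤ := LinearMap.range_eq_top.mpr (Set.range_eq_univ.mp hr)
  set e := ContinuousLinearEquiv.ofBijective T hk hr' with he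
  have hce : ⇑e = ⇑T := congrArg DFunLike.coe (ContinuousLinearEquiv.coe_ofBijective T hk hr')
  refine ⟨⟨T, e.symm.toContinuousLinearMap, ?_, ?_⟩, rfl⟩
  · ext x
    simp only [ContinuousLinearMap.mul_apply, ContinuousLinearMap.one_apply,
      ContinuousLinearEquiv.coe_coe, ← hce]
    exact e.apply_symm_apply x
  · ext x
    simp only [ContinuousLinearMap.mul_apply, ContinuousLinearMap.one_apply,
      ContinuousLinearEquiv.coe_coe, ← hce]
    exact e.symm_apply_apply x

theorem stmt11_spec_aux {X Y : Type*} [NormedAddCommGroup X] [NormedSpace ℂ X]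
    [NormedAddCommGroup Y] [NormedSpace ℂ Y]
    (A : X →L[ℂ] Y) (B : Y →L[ℂ] X) (l : ℂ) (hl : l ≠ 0)
    (h : l ∈ spectrum ℂ (A.comp B)) : l ∈ spectrum ℂ (B.comp A) := by
  rw [spectrum.mem_iff] at h ⊢
  exact fun hu => h (stmt11_unit_aux B A l hl hu)

theorem stmt11_neuniv_aux {X Y : Type*} [NormedAddCommGroup X] [NormedSpace ℂ X]
    [CompleteSpace X] [NormedAddCommGroup Y] [NormedSpace ℂ Y]
    (A : X →L[ℂ] Y) (B : Y →L[ℂ] X) (l : ℂ)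
    (hs : l ∈ spectrum ℂ (B.comp A))
    (hk : LinearMap.ker ((B.comp A - l • (1 : X →L[ℂ] X) : X →L[ℂ] X) : X →ₗ[ℂ] X) = ⊥) :
    Set.range (B.comp A - l • (1 : X →L[ℂ] X)) ≠ Set.univ := by
  intro hr
  have hu : IsUnit (B.comp A - l • (1 : X →L[ℂ] X)) := stmt11_inv_aux _ hk hr
  refine spectrum.mem_iff.mp hs ?_
  rw [Algebra.algebraMap_eq_smul_one]
  simpa [neg_sub] using hu.neg

/-- For bounded operators and `λ ≠ 0`, `λ` is in the residual spectrum of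
`AB` iff it is in the residual spectrum of `BA`, and likewise for the continuous
spectrum. -/
theorem stmt11 {X Y : Type*} [NormedAddCommGroup X] [NormedSpace ℂ X] [CompleteSpace X]
    [NormedAddCommGroup Y] [NormedSpace ℂ Y] [CompleteSpace Y]
    (A : X →L[ℂ] Y) (B : Y →L[ℂ] X) (l : ℂ) (hl : l ≠ 0) :
    ((l ∈ spectrum ℂ (A.comp B) ∧
        LinearMap.ker ((A.comp B - l • (1 : Y →L[ℂ] Y) : Y →L[ℂ] Y) : Y →ₗ[ℂ] Y) = ⊥ ∧
        ¬ Dense (Set.range (A.comp B - l • (1 : Y →L[ℂ] Y)))) ↔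
      (l ∈ spectrum ℂ (B.comp A) ∧
        LinearMap.ker ((B.comp A - l • (1 : X →L[ℂ] X) : X →L[ℂ] X) : X →ₗ[ℂ] X) = ⊥ ∧
        ¬ Dense (Set.range (B.comp A - l • (1 : X →L[ℂ] X))))) ∧
    ((l ∈ spectrum ℂ (A.comp B) ∧
        LinearMap.ker ((A.comp B - l • (1 : Y →L[ℂ] Y) : Y →L[ℂ] Y) : Y →ₗ[ℂ] Y) = ⊥ ∧
        Dense (Set.range (A.comp B - l • (1 : Y →L[ℂ] Y))) ∧
        Set.range (A.comp B - l • (1 : Y →L[ℂ] Y)) ≠ Set.univ) ↔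
      (l ∈ spectrum ℂ (B.comp A) ∧
        LinearMap.ker ((B.comp A - l • (1 : X →L[ℂ] X) : X →L[ℂ] X) : X →ₗ[ℂ] X) = ⊥ ∧
        Dense (Set.range (B.comp A - l • (1 : X →L[ℂ] X))) ∧
        Set.range (B.comp A - l • (1 : X →L[ℂ] X)) ≠ Set.univ)) := by
  constructor
  · constructor
    · rintro ⟨hs, hk, hd⟩
      exact ⟨stmt11_spec_aux A B l hl hs, stmt11_ker_aux B A l hl hk,
        fun d => hd (stmt11_dense_aux A B l hl d)⟩
    · rintro ⟨hs, hk, hd⟩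
      exact ⟨stmt11_spec_aux B A l hl hs, stmt11_ker_aux A B l hl hk,
        fun d => hd (stmt11_dense_aux B A l hl d)⟩
  · constructor
    · rintro ⟨hs, hk, hd, _⟩
      have hs' := stmt11_spec_aux A B l hl hs
      have hk' := stmt11_ker_aux B A l hl hk
      exact ⟨hs', hk', stmt11_dense_aux B A l hl hd, stmt11_neuniv_aux A B l hs' hk'⟩
    · rintro ⟨hs, hk, hd, _⟩
      have hs' := stmt11_spec_aux B A l hl hs
      have hk' := stmt11_ker_aux A B l hl hk
      exact ⟨hs', hk', stmt11_dense_aux A B l hl hd, stmt11_neuniv_aux B A l hs' hk'⟩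
end
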